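/- Large-contest minimization of the highest payoff: for every n ≥ 1 and every finite list (n_1,...,n_T) of positive integers with n_1 + ... + n_T = n, one has (1 + n_1)² · ∏_{s=2}^T (1 + n_s) ≤ 9·2^{n−2}, with equality if and only if n_1 = 2 and n_s = 1 for all s ≥ 2 (which requires n ≥ 2). -/

import Mathlib

private lemma lemA3 : ∀ x : ℕ, 3 ≤ x → 4 * (1 + x) ^ 2 < 9 * 2 ^ x := by
  intro x hx
  induction x, hx using Nat.le_induction with
  | base => norm_num
  | succ x hx ih =>
    have h1 : 4 * (1 + (x + 1)) ^ 2 ≤ 2 * (4 * (1 + x) ^ 2) := by nlinarith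
    calc 4 * (1 + (x + 1)) ^ 2 ≤ 2 * (4 * (1 + x) ^ 2) := h1
      _ < 2 * (9 * 2 ^ x) := by omega
      _ = 9 * 2 ^ (x + 1) := by ring

private lemma lemA (x : ℕ) (hx : 1 ≤ x) :
    4 * (1 + x) ^ 2 ≤ 9 * 2 ^ x ∧ (4 * (1 + x) ^ 2 = 9 * 2 ^ x ↔ x = 2) := by
  rcases Nat.lt_or_ge x 3 with h | h
  · interval_cases x <;> norm_num
  · have := lemA3 x h
    constructor
    · omega
    · constructor
      · intro he; omega
      · intro he; omega

private lemma lemC2 : ∀ x : ℕ, 2 ≤ x → 1 + x < 2 ^ x := by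
  intro x hx
  induction x, hx using Nat.le_induction with
  | base => norm_num
  | succ x hx ih =>
    have : (2:ℕ) ^ (x+1) = 2 * 2 ^ x := by ring
    omega

private lemma lemC (x : ℕ) (hx : 0 < x) :
    1 + x ≤ 2 ^ x ∧ (1 + x = 2 ^ x ↔ x = 1) := by
  rcases Nat.lt_or_ge x 2 with h | h
  · interval_cases x <;> norm_num
  · have := lemC2 x h
    exact ⟨le_of_lt this, by omega⟩

private lemma lemB (l : List ℕ) (h : ∀ x ∈ l, 0 < x) :
    (l.map (fun s => 1 + s)).prod ≤ 2 ^ l.sum ∧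
      ((l.map (fun s => 1 + s)).prod = 2 ^ l.sum ↔ ∀ x ∈ l, x = 1) := by
  induction l with
  | nil => simp
  | cons a t ih =>
    have ha : 0 < a := h a (by simp)
    have ht : ∀ x ∈ t, 0 < x := fun x hx => h x (by simp [hx])
    obtain ⟨ih1, ih2⟩ := ih ht
    obtain ⟨hc1, hc2⟩ := lemC a ha
    have hprodpos : 0 < (t.map (fun s => 1 + s)).prod := by
      apply List.prod_pos; intro x hx
      simp only [List.mem_map] at hx
      obtain ⟨y, _, rfl⟩ := hx; omega
    constructor
    · simp only [List.map_cons, List.prod_cons, List.sum_cons, pow_add]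
      exact Nat.mul_le_mul hc1 ih1
    · simp only [List.map_cons, List.prod_cons, List.sum_cons, pow_add]
      constructor
      · intro he
        have h2pos : (0:ℕ) < 2 ^ t.sum := Nat.pow_pos (by norm_num)
        have hea : 1 + a = 2 ^ a := by
          by_contra hne
          have : 1 + a < 2 ^ a := lt_of_le_of_ne hc1 hne
          have : (1 + a) * (t.map (fun s => 1 + s)).prod < 2 ^ a * 2 ^ t.sum :=
            Nat.mul_lt_mul_of_lt_of_le this ih1 h2pos
          omega
        have het : (t.map (fun s => 1 + s)).prod = 2 ^ t.sum := by
          have h2a : (0:ℕ) < 2 ^ a := Nat.pow_pos (by norm_num)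
          rw [hea] at he
          exact Nat.eq_of_mul_eq_mul_left h2a he
        intro x hx
        rcases List.mem_cons.mp hx with rfl | hx
        · exact hc2.mp hea
        · exact (ih2.mp het) x hx
      · intro hall
        have ha1 : a = 1 := hall a (by simp)
        have ht1 : (t.map (fun s => 1 + s)).prod = 2 ^ t.sum :=
          ih2.mpr (fun x hx => hall x (by simp [hx]))
        rw [ht1, hc2.mpr ha1]

theorem stmt_8 (n : ℕ) (hn : 1 ≤ n) (n1 : ℕ) (rest : List ℕ)
    (hpos : ∀ x ∈ n1 :: rest, 0 < x) (hsum : (n1 :: rest).sum = n) :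
    ((1 + n1 : ℝ)) ^ 2 * ((rest.map (fun s => 1 + s)).prod : ℕ) ≤
      9 * (2 : ℝ) ^ ((n : ℤ) - 2) ∧
    (((1 + n1 : ℝ)) ^ 2 * ((rest.map (fun s => 1 + s)).prod : ℕ) =
        9 * (2 : ℝ) ^ ((n : ℤ) - 2) ↔ (n1 = 2 ∧ ∀ x ∈ rest, x = 1)) := by
  have hn1 : 0 < n1 := hpos n1 (by simp)
  have hrest : ∀ x ∈ rest, 0 < x := fun x hx => hpos x (by simp [hx])
  obtain ⟨hA1, hA2⟩ := lemA n1 hn1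
  obtain ⟨hB1, hB2⟩ := lemB rest hrest
  set P := (rest.map (fun s => 1 + s)).prod with hP
  have hPpos : 0 < P := by
    apply List.prod_pos; intro x hx
    simp only [List.mem_map] at hx
    obtain ⟨y, _, rfl⟩ := hx; omega
  have hnsum : n = n1 + rest.sum := by simpa using hsum.symm
  -- natural number inequality
  have hNle : 4 * ((1 + n1) ^ 2 * P) ≤ 9 * 2 ^ n := by
    calc 4 * ((1 + n1) ^ 2 * P) = (4 * (1 + n1) ^ 2) * P := by ring
      _ ≤ (9 * 2 ^ n1) * 2 ^ rest.sum := Nat.mul_le_mul hA1 hB1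
      _ = 9 * 2 ^ n := by rw [hnsum, pow_add]; ring
  have hNeq : 4 * ((1 + n1) ^ 2 * P) = 9 * 2 ^ n ↔ (n1 = 2 ∧ ∀ x ∈ rest, x = 1) := by
    constructor
    · intro he
      have h2pos : (0:ℕ) < 2 ^ rest.sum := Nat.pow_pos (by norm_num)
      have h9pos : (0:ℕ) < 9 * 2 ^ n1 := by positivity
      have he' : (4 * (1 + n1) ^ 2) * P = (9 * 2 ^ n1) * 2 ^ rest.sum := by
        rw [hnsum, pow_add] at he; ring_nf at he ⊢; omega
      have hea : 4 * (1 + n1) ^ 2 = 9 * 2 ^ n1 := by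
        by_contra hne
        have hlt : 4 * (1 + n1) ^ 2 < 9 * 2 ^ n1 := lt_of_le_of_ne hA1 hne
        have : (4 * (1 + n1) ^ 2) * P < (9 * 2 ^ n1) * 2 ^ rest.sum :=
          Nat.mul_lt_mul_of_lt_of_le hlt hB1 h2pos
        omega
      have heb : P = 2 ^ rest.sum := by
        rw [hea] at he'
        exact Nat.eq_of_mul_eq_mul_left h9pos he'
      exact ⟨hA2.mp hea, hB2.mp heb⟩
    · rintro ⟨h1, h2⟩
      have hea := hA2.mpr h1
      have heb := hB2.mpr h2
      calc 4 * ((1 + n1) ^ 2 * P) = (4 * (1 + n1) ^ 2) * P := by ring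
        _ = (9 * 2 ^ n1) * 2 ^ rest.sum := by rw [hea, heb]
        _ = 9 * 2 ^ n := by rw [hnsum, pow_add]; ring
  -- convert to reals
  have hR : (9:ℝ) * (2:ℝ) ^ ((n : ℤ) - 2) = ((9 * 2 ^ n : ℕ) : ℝ) / 4 := by
    rw [zpow_sub₀ (by norm_num : (2:ℝ) ≠ 0)]
    push_cast
    rw [zpow_natCast]
    ring
  have hL : ((1 + n1 : ℝ)) ^ 2 * (P : ℝ) = (((1 + n1) ^ 2 * P : ℕ) : ℝ) := by
    push_cast; ring
  rw [hR, hL]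
  constructor
  · rw [le_div_iff₀ (by norm_num : (0:ℝ) < 4)]
    have := hNle
    calc (((1 + n1) ^ 2 * P : ℕ) : ℝ) * 4 = ((4 * ((1 + n1) ^ 2 * P) : ℕ) : ℝ) := by
          push_cast; ring
      _ ≤ ((9 * 2 ^ n : ℕ) : ℝ) := by exact_mod_cast this
  · rw [eq_div_iff (by norm_num : (4:ℝ) ≠ 0), ← hNeq]
    constructor
    · intro he
      have : ((4 * ((1 + n1) ^ 2 * P) : ℕ) : ℝ) = ((9 * 2 ^ n : ℕ) : ℝ) := by
        push_cast at he ⊢; linarith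
      exact_mod_cast this
    · intro he
      have : ((4 * ((1 + n1) ^ 2 * P) : ℕ) : ℝ) = ((9 * 2 ^ n : ℕ) : ℝ) := by
        exact_mod_cast he
      push_cast at this ⊢; linarith
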